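/- If B is a bounded linear operator on H satisfying B A ⊆ A B, then B maps F(A,λ) into F(A,λ), and the adjoint B* maps the orthogonal complement F(A,λ)⊥ into F(A,λ)⊥. -/

import Mathlib

open InnerProductSpace RCLike Filter Topology MeasureTheory Set

variable {𝕜 E : Type*} [RCLike 𝕜] [NormedAddCommGroup E] [InnerProductSpace 𝕜 E]

local notation "⟪" x ", " y "⟫" => @inner 𝕜 _ _ x y

/-- `PowRel A n x y` means `x ∈ D(Aⁿ)` and `Aⁿ x = y`. -/
inductive PowRel (A : E →ₗ.[𝕜] E) : ℕ → E → E → Prop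
  | zero (x : E) : PowRel A 0 x x
  | succ {n : ℕ} {x y : E} (h : PowRel A n x y) (hy : y ∈ A.domain) :
      PowRel A (n + 1) x (A ⟨y, hy⟩)

/-- `F(A,λ)` for an unbounded operator. -/
def Fset (A : E →ₗ.[𝕜] E) (lam : ℝ) : Set E :=
  {x | ∀ n : ℕ, ∃ y : E, PowRel A n x y ∧ ‖y‖ ≤ lam ^ n * ‖x‖}

/-- orthogonal complement of a set -/
def ocompl (𝕜' : Type*) {E' : Type*} [RCLike 𝕜'] [NormedAddCommGroup E']
    [InnerProductSpace 𝕜' E'] (S : Set E') : Set E' :=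
  {y | ∀ x ∈ S, (inner 𝕜' x y : 𝕜') = 0}

/-- Hermitian (symmetric) partially defined operator. -/
def IsHermitianPMap (A : E →ₗ.[𝕜] E) : Prop :=
  ∀ x y : A.domain, ⟪A x, (y : E)⟫ = ⟪(x : E), A y⟫

/-- Self-adjoint partially defined operator (densely defined, symmetric, maximal). -/
def IsSelfAdjointPMap (A : E →ₗ.[𝕜] E) : Prop :=
  Dense (A.domain : Set E) ∧ IsHermitianPMap A ∧
    ∀ y z : E, (∀ x : A.domain, ⟪A x, y⟫ = ⟪(x : E), z⟫) →
      ∃ hy : y ∈ A.domain, A ⟨y, hy⟩ = z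

/-- `F(T,λ)` for a bounded operator. -/
def FsetB (T : E →L[𝕜] E) (lam : ℝ) : Set E :=
  {x | ∀ n : ℕ, ‖(T ^ n) x‖ ≤ lam ^ n * ‖x‖}

/-- Spectral family (resolution of the identity). -/
def IsSpectralFamily (P : ℝ → (E →L[𝕜] E)) : Prop :=
  (∀ t, IsIdempotentElem (P t)) ∧
  (∀ t x y, ⟪P t x, y⟫ = ⟪x, P t y⟫) ∧
  (∀ s t : ℝ, s ≤ t → ∀ x, P t (P s x) = P s x) ∧
  (∀ t x, Tendsto (fun s => P s x) (𝓝[>] t) (𝓝 (P t x))) ∧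
  (∀ x, Tendsto (fun t => P t x) atBot (𝓝 (0 : E))) ∧
  (∀ x, Tendsto (fun t => P t x) atTop (𝓝 x))

open Classical in
/-- Lebesgue–Stieltjes measure of a monotone right-continuous function (junk value otherwise). -/
noncomputable def stMeasure (f : ℝ → ℝ) : Measure ℝ :=
  if h : Monotone f ∧ ∀ x, ContinuousWithinAt f (Ici x) x then
    StieltjesFunction.measure ⟨f, h.1, h.2⟩ else 0

section Aux

/-- Ratio monotonicity for a nonnegative log-convex sequence. -/
private lemma ratio_aux (a : ℕ → ℝ) (ha : ∀ n, 0 ≤ a n)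
    (hconv : ∀ n, (a (n+1))^2 ≤ a n * a (n+2)) :
    ∀ i j, i ≤ j → a (i+1) * a j ≤ a i * a (j+1) := by
  intro i j hij
  induction j with
  | zero =>
    interval_cases i
    exact (mul_comm (a 1) (a 0)).le
  | succ j ih =>
    rcases Nat.lt_or_ge i (j+1) with h | h
    · have ih' := ih (Nat.lt_succ_iff.mp h)
      rcases eq_or_lt_of_le (ha (j+1)) with h0 | h0
      · have : a (i+1) * a (j+1) = 0 := by rw [← h0]; ring
        rw [this]
        exact mul_nonneg (ha i) (ha (j+2))
      · have h1 : a (i+1) * (a (j+1))^2 ≤ a (i+1) * (a j * a (j+2)) :=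
          mul_le_mul_of_nonneg_left (hconv j) (ha (i+1))
      -- a(i+1)*a j ≤ a i * a(j+1), multiply by a(j+2)
        have h2 : (a (i+1) * a j) * a (j+2) ≤ (a i * a (j+1)) * a (j+2) :=
          mul_le_mul_of_nonneg_right ih' (ha (j+2))
        have h3 : a (i+1) * a (j+1) * a (j+1) ≤ a i * a (j+2) * a (j+1) := by
          nlinarith [ha (j+2), ha i, ha (i+1)]
        exact le_of_mul_le_mul_right h3 h0
    · have : i = j + 1 := le_antisymm hij h
      subst this
      exact (mul_comm (a (j+2)) (a (j+1))).le

/-- Midpoint log-convexity. -/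
private lemma mid_aux (a : ℕ → ℝ) (ha : ∀ n, 0 ≤ a n)
    (hconv : ∀ n, (a (n+1))^2 ≤ a n * a (n+2)) :
    ∀ k i, (a (i+k))^2 ≤ a i * a (i+k+k) := by
  intro k
  induction k with
  | zero => intro i; simpa [pow_two] using le_refl (a i * a i)
  | succ k ih =>
    intro i
    have e1 : i + (k+1) = (i+1) + k := by omega
    rw [e1]
    have e2 : i + 1 + k + (k+1) = (i+1) + k + k + 1 := by omega
    rw [e2]
    have h1 := ih (i+1)
    have h2 := ratio_aux a ha hconv i ((i+1)+k+k) (by omega)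
    calc (a (i+1+k))^2 ≤ a (i+1) * a (i+1+k+k) := h1
      _ ≤ a i * a (i+1+k+k+1) := h2

/-- Doubling estimate. -/
private lemma doubling_aux (a : ℕ → ℝ) (ha : ∀ n, 0 ≤ a n)
    (hconv : ∀ n, (a (n+1))^2 ≤ a n * a (n+2)) :
    ∀ j n, a n ^ (2^j) ≤ a 0 ^ (2^j - 1) * a (2^j * n) := by
  intro j
  induction j with
  | zero => intro n; simp
  | succ j ih =>
    intro n
    have hk : 1 ≤ 2^j := Nat.one_le_two_pow
    have h1 : a n ^ (2^(j+1)) = (a n ^ (2^j))^2 := by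
      rw [← pow_mul, ← pow_succ]
    have h2 : (a n ^ (2^j))^2 ≤ (a 0 ^ (2^j - 1) * a (2^j * n))^2 := by
      apply pow_le_pow_left₀ (pow_nonneg (ha n) _) (ih n)
    have h3 : (a 0 ^ (2^j - 1) * a (2^j * n))^2
        = a 0 ^ (2*(2^j - 1)) * (a (2^j * n))^2 := by
      rw [mul_pow, ← pow_mul]; ring_nf
    have h4 : (a (2^j * n))^2 ≤ a 0 * a (2^j * n + 2^j * n) := by
      have := mid_aux a ha hconv (2^j * n) 0
      simpa using this
    have e1 : 2^j * n + 2^j * n = 2^(j+1) * n := by ring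
    have e2 : 2*(2^j - 1) + 1 = 2^(j+1) - 1 := by
      have : 2^(j+1) = 2 * 2^j := by ring
      omega
    calc a n ^ (2^(j+1)) = (a n ^ (2^j))^2 := h1
      _ ≤ (a 0 ^ (2^j - 1) * a (2^j * n))^2 := h2
      _ = a 0 ^ (2*(2^j - 1)) * (a (2^j * n))^2 := h3
      _ ≤ a 0 ^ (2*(2^j - 1)) * (a 0 * a (2^j * n + 2^j * n)) := by
          apply mul_le_mul_of_nonneg_left h4 (pow_nonneg (ha 0) _)
      _ = a 0 ^ (2*(2^j - 1) + 1) * a (2^(j+1) * n) := by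
          rw [e1, pow_succ]; ring
      _ = a 0 ^ (2^(j+1) - 1) * a (2^(j+1) * n) := by rw [e2]

/-- Key analytic lemma: a nonnegative log-convex sequence dominated by `C·λⁿ`
satisfies `aₙ ≤ λⁿ a₀`. -/
private lemma key_aux (a : ℕ → ℝ) (ha : ∀ n, 0 ≤ a n)
    (hconv : ∀ n, (a (n+1))^2 ≤ a n * a (n+2)) (C lam : ℝ) (hlam : 0 ≤ lam)
    (hb : ∀ n, a n ≤ C * lam ^ n) : ∀ n, a n ≤ lam ^ n * a 0 := by
  intro n
  by_contra hcon
  push_neg at hcon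
  have han : 0 < a n :=
    lt_of_le_of_lt (mul_nonneg (pow_nonneg hlam n) (ha 0)) hcon
  rcases eq_or_lt_of_le (ha 0) with h0 | h0
  · -- a 0 = 0 : use doubling with j = 1
    have hd := doubling_aux a ha hconv 1 n
    have h1 : a n ^ 2 ≤ 0 := by
      calc a n ^ 2 = a n ^ (2^1) := by norm_num
        _ ≤ a 0 ^ (2^1 - 1) * a (2^1 * n) := hd
        _ = 0 := by rw [← h0]; norm_num
    nlinarith
  · -- a 0 > 0
    have hC : 0 < C := by
      have := hb 0
      simp at this
      exact lt_of_lt_of_le h0 this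
    rcases Nat.eq_zero_or_pos n with rfl | hn
    · simp at hcon
    have hlam' : 0 < lam := by
      rcases eq_or_lt_of_le hlam with hl | hl
      · exfalso
        have hbn := hb n
        rw [← hl, zero_pow (by omega : n ≠ 0), mul_zero] at hbn
        linarith
      · exact hl
    set r : ℝ := a n / (lam ^ n * a 0) with hr_def
    have hden : 0 < lam ^ n * a 0 := by positivity
    have hr : 1 < r := (one_lt_div hden).2 hcon
    have hle : ∀ j : ℕ, r ^ (2^j) ≤ C / a 0 := by
      intro j
      have hd := doubling_aux a ha hconv j n
      have hbj := hb (2^j * n)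
      have hk : 1 ≤ 2^j := Nat.one_le_two_pow
      have h1 : a n ^ (2^j) ≤ a 0 ^ (2^j - 1) * (C * lam ^ (2^j * n)) := by
        calc a n ^ (2^j) ≤ a 0 ^ (2^j - 1) * a (2^j * n) := hd
          _ ≤ a 0 ^ (2^j - 1) * (C * lam ^ (2^j * n)) := by
              apply mul_le_mul_of_nonneg_left hbj (by positivity)
      have h2 : a n ^ (2^j) * a 0 ≤ a 0 ^ (2^j) * (C * lam ^ (2^j * n)) := by
        have := mul_le_mul_of_nonneg_right h1 (ha 0)
        calc a n ^ (2^j) * a 0 ≤ a 0 ^ (2^j - 1) * (C * lam ^ (2^j * n)) * a 0 := this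
          _ = a 0 ^ (2^j - 1) * a 0 * (C * lam ^ (2^j * n)) := by ring
          _ = a 0 ^ (2^j) * (C * lam ^ (2^j * n)) := by
              rw [← pow_succ]
              congr 2
              omega
      rw [hr_def, div_pow, div_le_div_iff₀ (by positivity) h0]
      calc a n ^ (2^j) * a 0 ≤ a 0 ^ (2^j) * (C * lam ^ (2^j * n)) := h2
        _ = C * (lam ^ n * a 0) ^ (2^j) := by
            rw [mul_pow, ← pow_mul, Nat.mul_comm]
            ring
    obtain ⟨m, hm⟩ := pow_unbounded_of_one_lt (C / a 0) hr
    have hmono : r ^ m ≤ r ^ (2^m) :=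
      pow_le_pow_right₀ hr.le (Nat.lt_two_pow_self (n := m)).le
    have := le_trans hmono (hle m)
    linarith

/-- Uniqueness of `PowRel`. -/
private lemma powRel_unique {A : E →ₗ.[𝕜] E} {n : ℕ} {x y : E} (h1 : PowRel A n x y) :
    ∀ {z : E}, PowRel A n x z → y = z := by
  induction h1 with
  | zero =>
    intro z h2
    cases h2
    rfl
  | succ h hy ih =>
    intro z h2
    cases h2 with
    | succ h' hy' =>
      obtain rfl := ih h'
      rfl

private lemma powRel_succ_inv {A : E →ₗ.[𝕜] E} {n : ℕ} {x z : E} (h : PowRel A (n+1) x z) :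
    ∃ y : E, ∃ hm : y ∈ A.domain, PowRel A n x y ∧ z = A ⟨y, hm⟩ := by
  cases h with
  | succ h hy => exact ⟨_, hy, h, rfl⟩

private lemma powRel_map {A : E →ₗ.[𝕜] E} {B : E →L[𝕜] E}
    (hcomm : ∀ (x : E) (hx : x ∈ A.domain), ∃ h : B x ∈ A.domain,
      A ⟨B x, h⟩ = B (A ⟨x, hx⟩)) :
    ∀ {n : ℕ} {x y : E}, PowRel A n x y → PowRel A n (B x) (B y) := by
  intro n x y h
  induction h with
  | zero => exact PowRel.zero _
  | succ h hy ih =>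
    obtain ⟨hBy, hEq⟩ := hcomm _ hy
    exact hEq ▸ PowRel.succ ih hBy

end Aux

theorem stmt1 [CompleteSpace E] (A : E →ₗ.[𝕜] E) (hA : A.IsClosed) (hH : IsHermitianPMap A)
    (lam : ℝ) (hlam : 0 ≤ lam) (B : E →L[𝕜] E)
    (hcomm : ∀ (x : E) (hx : x ∈ A.domain), ∃ h : B x ∈ A.domain,
      A ⟨B x, h⟩ = B (A ⟨x, hx⟩)) :
    (∀ x ∈ Fset A lam, B x ∈ Fset A lam) ∧
      ∀ y ∈ ocompl 𝕜 (Fset A lam), ContinuousLinearMap.adjoint B y ∈ ocompl 𝕜 (Fset A lam) := by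
  have main : ∀ x ∈ Fset A lam, B x ∈ Fset A lam := by
    intro x hx
    choose y hy hbound using hx
    have h0 : y 0 = x := powRel_unique (hy 0) (PowRel.zero x)
    have hstep : ∀ n : ℕ, ∃ hm : y n ∈ A.domain, A ⟨y n, hm⟩ = y (n+1) := by
      intro n
      obtain ⟨z, hz, hpz, heq⟩ := powRel_succ_inv (hy (n+1))
      obtain rfl := powRel_unique (hy n) hpz
      exact ⟨hz, heq.symm⟩
    -- for each n, B (y n) ∈ domain and A (B (y n)) = B (y (n+1))
    have hBstep : ∀ n : ℕ, ∃ hm : B (y n) ∈ A.domain, A ⟨B (y n), hm⟩ = B (y (n+1)) := by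
      intro n
      obtain ⟨hm, heq⟩ := hstep n
      obtain ⟨hB, hBeq⟩ := hcomm (y n) hm
      exact ⟨hB, by rw [hBeq, heq]⟩
    set a : ℕ → ℝ := fun n => ‖B (y n)‖ with ha_def
    have ha : ∀ n, 0 ≤ a n := fun n => norm_nonneg _
    have hconv : ∀ n, (a (n+1))^2 ≤ a n * a (n+2) := by
      intro n
      obtain ⟨hm0, he0⟩ := hBstep n
      obtain ⟨hm1, he1⟩ := hBstep (n+1)
      have hherm := hH ⟨B (y n), hm0⟩ ⟨B (y (n+1)), hm1⟩
      rw [he0, he1] at hherm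
      -- hherm : ⟪B (y (n+1)), B (y (n+1))⟫ = ⟪B (y n), B (y (n+2))⟫
      have h1 : (a (n+1))^2 = re (⟪B (y n), B (y (n+2))⟫ : 𝕜) := by
        rw [← hherm]
        simp [ha_def, inner_self_eq_norm_sq]
      have h2 : re (⟪B (y n), B (y (n+2))⟫ : 𝕜) ≤ ‖(⟪B (y n), B (y (n+2))⟫ : 𝕜)‖ :=
        RCLike.re_le_norm _
      have h3 : ‖(⟪B (y n), B (y (n+2))⟫ : 𝕜)‖ ≤ ‖B (y n)‖ * ‖B (y (n+2))‖ :=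
        norm_inner_le_norm _ _
      rw [h1]
      exact le_trans h2 h3
    have hb : ∀ n, a n ≤ (‖B‖ * ‖x‖) * lam ^ n := by
      intro n
      calc a n ≤ ‖B‖ * ‖y n‖ := B.le_opNorm _
        _ ≤ ‖B‖ * (lam ^ n * ‖x‖) := by
            apply mul_le_mul_of_nonneg_left (hbound n) (norm_nonneg _)
        _ = (‖B‖ * ‖x‖) * lam ^ n := by ring
    have hkey := key_aux a ha hconv (‖B‖ * ‖x‖) lam hlam hb
    intro n
    refine ⟨B (y n), powRel_map hcomm (hy n), ?_⟩
    have := hkey n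
    rw [ha_def] at this
    simpa [h0] using this
  refine ⟨main, ?_⟩
  intro yv hyv x hx
  rw [ContinuousLinearMap.adjoint_inner_right]
  exact hyv (B x) (main x hx)
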